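/- Let ν_r > 0, μ ∈ ℝ^d and Σ ∈ SPD(d) be fixed, set δ_i := (x_i − μ)ᵀ Σ^{-1} (x_i − μ) and b := Σ_{i=1}^n w_i [ (ν_r + d)/(ν_r + δ_i) − log((ν_r + d)/(ν_r + δ_i)) − 1 ]. Let ν^{aEM} be the unique zero of ν ↦ φ(ν/2) − φ((ν_r + d)/2) + b; let ν^{MMF} be the unique zero of ν ↦ φ(ν/2) − φ((ν+d)/2) + b; and let ν^{GMMF} be the limit of the inner iteration ν_{(0)} = ν_r, ν_{(l+1)} = zero of ν ↦ φ(ν/2) − φ((ν+d)/2) + Σ_{i=1}^n w_i [ (ν_{(l)} + d)/(ν_{(l)} + δ_i) − log((ν_{(l)} + d)/(ν_{(l)} + δ_i)) − 1 ], assuming this iteration converges. Then L(ν_r, μ, Σ) ≥ L(ν^{aEM}, μ, Σ) ≥ L(ν^{MMF}, μ, Σ) ≥ L(ν^{GMMF}, μ, Σ), and equality holds if and only if ∂L/∂ν (ν_r, μ, Σ) = 0, in which case ν_r = ν^{aEM} = ν^{MMF} = ν^{GMMF}. -/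

import Mathlib

open Real Matrix Filter Topology

/-- The digamma function `ψ(x) = d/dx log Γ(x)`. -/
noncomputable def digamma (x : ℝ) : ℝ := deriv (fun y => Real.log (Real.Gamma y)) x

/-- `φ(x) := ψ(x) - log x`. -/
noncomputable def phiFn (x : ℝ) : ℝ := digamma x - Real.log x

/-- The negative log-likelihood `L(ν, μ, Σ)` of the Student-t distribution:
`L = −2 log Γ((d+ν)/2) + 2 log Γ(ν/2) − ν log ν
  + (d+ν) Σᵢ wᵢ log(ν + (xᵢ−μ)ᵀ Σ⁻¹ (xᵢ−μ)) + log det Σ`. -/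
noncomputable def negLogLik3 (d n : ℕ) (x : Fin n → Fin d → ℝ) (w : Fin n → ℝ)
    (ν : ℝ) (μ : Fin d → ℝ) (S : Matrix (Fin d) (Fin d) ℝ) : ℝ :=
  -2 * Real.log (Real.Gamma ((d + ν) / 2)) + 2 * Real.log (Real.Gamma (ν / 2))
    - ν * Real.log ν
    + (d + ν) * ∑ i, w i * Real.log (ν + (x i - μ) ⬝ᵥ S⁻¹ *ᵥ (x i - μ))
    + Real.log S.det

open Set

noncomputable def gFn (y : ℝ) : ℝ := 1 / y - (Real.log (y + 1) - Real.log y)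

lemma logGamma_diffAt {x : ℝ} (hx : 0 < x) :
    DifferentiableAt ℝ (fun y => Real.log (Real.Gamma y)) x := by
  exact (Real.differentiableAt_Gamma (fun m => ((neg_nonpos.mpr (Nat.cast_nonneg m)).trans_lt hx).ne')).log
    (Real.Gamma_pos_of_pos hx).ne'

lemma hasDerivAt_logGamma {x : ℝ} (hx : 0 < x) :
    HasDerivAt (fun y => Real.log (Real.Gamma y)) (digamma x) x :=
  (logGamma_diffAt hx).hasDerivAt

lemma digamma_add_one {x : ℝ} (hx : 0 < x) : digamma (x + 1) = digamma x + 1 / x := by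
  have h1 : digamma (x + 1) = deriv ((fun y => Real.log (Real.Gamma y)) ∘ (fun y => y + 1)) x := by
    rw [Function.comp_def, digamma, ← deriv_comp_add_const]
  rw [h1]
  have h2 : (fun y => Real.log (Real.Gamma y)) ∘ (fun y => y + 1)
      =ᶠ[nhds x] fun y => Real.log (Real.Gamma y) + Real.log y := by
    filter_upwards [eventually_gt_nhds hx] with y hy
    simp only [Function.comp_apply, Real.Gamma_add_one hy.ne',
      Real.log_mul hy.ne' (Real.Gamma_pos_of_pos hy).ne', add_comm]
  rw [h2.deriv_eq, deriv_fun_add (logGamma_diffAt hx) (Real.differentiableAt_log hx.ne'),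
    Real.deriv_log, digamma, one_div]

lemma digamma_le_log {x : ℝ} (hx : 0 < x) : digamma x ≤ Real.log x := by
  have h := Real.convexOn_log_Gamma.deriv_le_slope (mem_Ioi.mpr hx)
    (mem_Ioi.mpr (by linarith : (0:ℝ) < x + 1)) (by linarith)
    (by simpa [Function.comp_def] using logGamma_diffAt hx)
  rw [slope_def_field] at h
  simp only [Function.comp_apply] at h
  calc digamma x = deriv (Real.log ∘ Real.Gamma) x := by
        rw [digamma]; congr 1
    _ ≤ _ := h.trans (le_of_eq ?_)
  rw [add_sub_cancel_left, div_one, Real.Gamma_add_one hx.ne',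
    Real.log_mul hx.ne' (Real.Gamma_pos_of_pos hx).ne']
  ring

lemma log_le_digamma {x : ℝ} (hx : 1 < x) : Real.log (x - 1) ≤ digamma x := by
  have hx0 : (0:ℝ) < x := by linarith
  have hx1 : (0:ℝ) < x - 1 := by linarith
  have h := Real.convexOn_log_Gamma.slope_le_deriv (mem_Ioi.mpr hx1)
    (mem_Ioi.mpr hx0) (by linarith)
    (by simpa [Function.comp_def] using logGamma_diffAt hx0)
  rw [slope_def_field] at h
  simp only [Function.comp_apply] at h
  refine le_trans (le_of_eq ?_) (h.trans (le_of_eq ?_))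
  · have : Real.Gamma x = (x-1) * Real.Gamma (x-1) := by
      have := Real.Gamma_add_one hx1.ne'
      simpa [sub_add_cancel] using this
    rw [this, Real.log_mul hx1.ne' (Real.Gamma_pos_of_pos hx1).ne']
    field_simp
    ring
  · rw [digamma]; congr 1


lemma gFn_pos {y : ℝ} (hy : 0 < y) : 0 < gFn y := by
  have h : Real.log (y + 1) - Real.log y = Real.log ((y+1)/y) := by
    rw [Real.log_div (by positivity) hy.ne']
  have h2 : Real.log ((y+1)/y) < (y+1)/y - 1 :=
    Real.log_lt_sub_one_of_pos (by positivity)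
      (ne_of_gt ((one_lt_div hy).mpr (by linarith)))
  have h3 : (y+1)/y - 1 = 1/y := by field_simp; ring
  unfold gFn; rw [h]; linarith [h2.trans_eq h3]

lemma gFn_le {y : ℝ} (hy : 0 < y) : gFn y ≤ 1 / y - 1 / (y + 1) := by
  have h2 : Real.log (y/(y+1)) ≤ y/(y+1) - 1 :=
    Real.log_le_sub_one_of_pos (by positivity)
  rw [Real.log_div hy.ne' (by positivity)] at h2
  have h3 : y/(y+1) - 1 = -(1/(y+1)) := by field_simp; ring
  unfold gFn; rw [h3] at h2; linarith

lemma hasDerivAt_gFn {y : ℝ} (hy : 0 < y) :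
    HasDerivAt gFn (-(1 / (y^2 * (y + 1)))) y := by
  have h1 : HasDerivAt (fun t : ℝ => 1/t) (-(1/y^2)) y := by
    simpa [one_div] using (hasDerivAt_inv hy.ne')
  have h2 : HasDerivAt (fun t : ℝ => Real.log (t+1)) (1/(y+1)) y := by
    simpa using ((hasDerivAt_id y).add_const 1).log (by positivity)
  have h3 : HasDerivAt (fun t : ℝ => Real.log t) (1/y) y := by
    simpa [one_div] using Real.hasDerivAt_log hy.ne'
  have := h1.sub (h2.sub h3)
  refine this.congr_deriv ?_
  field_simp
  ring

lemma gFn_strictAnti : StrictAntiOn gFn (Ioi 0) := by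
  refine strictAntiOn_of_deriv_neg (convex_Ioi 0) ?_ ?_
  · intro y hy
    exact ((hasDerivAt_gFn hy).differentiableAt).continuousAt.continuousWithinAt
  · intro y hy
    rw [interior_Ioi] at hy
    rw [(hasDerivAt_gFn hy).deriv]
    have hy' : (0:ℝ) < y := hy
    have : (0:ℝ) < 1 / (y^2*(y+1)) := by positivity
    linarith

lemma gFn_gap_mono {c : ℝ} (hc : 0 ≤ c) :
    MonotoneOn (fun a => gFn (a + c) - gFn a) (Ioi 0) := by
  have key : ∀ a ∈ Ioi (0:ℝ), HasDerivAt (fun a => gFn (a + c) - gFn a)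
      (-(1 / ((a+c)^2 * (a + c + 1))) - -(1 / (a^2 * (a + 1)))) a := by
    intro a ha
    rw [mem_Ioi] at ha
    have h1 : HasDerivAt (fun a : ℝ => gFn (a + c))
        (-(1 / ((a+c)^2 * (a + c + 1)))) a := by
      have := (hasDerivAt_gFn (by linarith : 0 < a + c)).comp a ((hasDerivAt_id a).add_const c)
      simpa [Function.comp_def] using this
    exact h1.sub (hasDerivAt_gFn ha)
  refine monotoneOn_of_deriv_nonneg (convex_Ioi 0) ?_ ?_ ?_
  · intro a ha
    exact ((key a ha).differentiableAt).continuousAt.continuousWithinAt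
  · intro a ha
    rw [interior_Ioi] at ha
    exact ((key a ha).differentiableAt).differentiableWithinAt
  · intro a ha
    rw [interior_Ioi] at ha
    rw [(key a ha).deriv]
    rw [mem_Ioi] at ha
    have h1 : (0:ℝ) < a^2*(a+1) := by positivity
    have h2 : (0:ℝ) < (a+c)^2*(a+c+1) := by positivity
    have e1 : a^2 ≤ (a+c)^2 := by nlinarith
    have h3 : a^2*(a+1) ≤ (a+c)^2*(a+c+1) :=
      mul_le_mul e1 (by linarith) (by positivity) (by positivity)
    have := one_div_le_one_div_of_le h1 h3
    linarith

noncomputable def TFn (x : ℝ) : ℝ := ∑' n : ℕ, gFn (x + n)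

lemma sum_gFn_le {x : ℝ} (hx : 0 < x) (N : ℕ) :
    ∑ n ∈ Finset.range N, gFn (x + n) ≤ 1 / x := by
  have h1 : ∑ n ∈ Finset.range N, gFn (x + n)
      ≤ ∑ n ∈ Finset.range N, (1 / (x + n) - 1 / (x + (n+1))) := by
    refine Finset.sum_le_sum fun n _ => ?_
    have hxn : (0:ℝ) < x + n := by positivity
    have := gFn_le hxn
    have e : x + n + 1 = x + (n + 1) := by push_cast; ring
    rw [e] at this
    exact this
  have h2 := Finset.sum_range_sub' (fun k : ℕ => 1 / (x + (k:ℝ))) N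
  push_cast at h2
  simp only [add_zero] at h2
  have h3 : (0:ℝ) ≤ 1 / (x + N) := by positivity
  calc ∑ n ∈ Finset.range N, gFn (x + n) ≤ _ := h1
    _ = 1/x - 1/(x+N) := by push_cast at h2 ⊢; convert h2 using 2 <;> push_cast <;> ring
    _ ≤ 1/x := by linarith

lemma summable_gFn {x : ℝ} (hx : 0 < x) : Summable (fun n : ℕ => gFn (x + n)) :=
  summable_of_sum_range_le (fun n => (gFn_pos (by positivity)).le) (sum_gFn_le hx)

lemma TFn_nonneg {x : ℝ} (hx : 0 < x) : 0 ≤ TFn x :=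
  tsum_nonneg fun n => (gFn_pos (by positivity)).le

lemma TFn_le {x : ℝ} (hx : 0 < x) : TFn x ≤ 1 / x :=
  Real.tsum_le_of_sum_range_le (fun n => (gFn_pos (by positivity)).le) (sum_gFn_le hx)

lemma TFn_rec {x : ℝ} (hx : 0 < x) : TFn x = gFn x + TFn (x + 1) := by
  rw [TFn, Summable.tsum_eq_zero_add (summable_gFn hx)]
  congr 1
  · norm_num
  · rw [TFn]
    congr 1
    funext n
    push_cast
    ring_nf

lemma phiFn_add_one {x : ℝ} (hx : 0 < x) : phiFn (x + 1) = phiFn x + gFn x := by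
  unfold phiFn gFn
  rw [digamma_add_one hx]
  ring

lemma phiFn_nonpos {x : ℝ} (hx : 0 < x) : phiFn x ≤ 0 := by
  have := digamma_le_log hx
  unfold phiFn; linarith

lemma phiFn_lb {x : ℝ} (hx : 1 < x) : Real.log (x - 1) - Real.log x ≤ phiFn x := by
  have := log_le_digamma hx
  unfold phiFn; linarith

lemma phiFn_eq_neg_TFn {x : ℝ} (hx : 0 < x) : phiFn x = - TFn x := by
  set D : ℝ → ℝ := fun y => phiFn y + TFn y with hD
  have hrec : ∀ y : ℝ, 0 < y → D (y + 1) = D y := by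
    intro y hy
    have h1 := phiFn_add_one hy
    have h2 := TFn_rec hy
    simp only [hD]
    linarith
  have hiter : ∀ N : ℕ, D (x + N) = D x := by
    intro N
    induction N with
    | zero => norm_num
    | succ k ih =>
      have : x + (k+1:ℕ) = (x + k) + 1 := by push_cast; ring
      rw [this, hrec _ (by positivity), ih]
  have h0 : Tendsto (fun N : ℕ => (x + (N:ℝ))) atTop atTop :=
    tendsto_atTop_add_const_left _ _ tendsto_natCast_atTop_atTop
  have h0' : Tendsto (fun N : ℕ => (x + (N:ℝ) - 1)) atTop atTop :=
    tendsto_atTop_add_const_right _ _ h0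
  have hub' : Tendsto (fun N : ℕ => 1 / (x + (N:ℝ) - 1)) atTop (nhds 0) :=
    h0'.inv_tendsto_atTop.congr (by intro N; simp [one_div])
  have hten : Tendsto (fun N : ℕ => D (x + N)) atTop (nhds 0) := by
    refine tendsto_of_tendsto_of_tendsto_of_le_of_le'
      (g := fun N : ℕ => -(1 / (x + (N:ℝ) - 1))) (by simpa using hub'.neg) hub' ?_ ?_
    · filter_upwards [eventually_ge_atTop 2] with N hN
      have h1 : (2:ℝ) ≤ (N:ℝ) := by exact_mod_cast hN
      have h2 : (0:ℝ) < x + N - 1 := by linarith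
      have h3 : (1:ℝ) < x + N := by linarith
      have hT := TFn_nonneg (show (0:ℝ) < x + N by linarith)
      have hphi := phiFn_lb h3
      have hlog : Real.log (x + (N:ℝ)) - Real.log (x + (N:ℝ) - 1) ≤ 1 / (x + (N:ℝ) - 1) := by
        have hd : Real.log ((x + N) / (x + N - 1)) ≤ (x + N) / (x + N - 1) - 1 :=
          Real.log_le_sub_one_of_pos (by positivity)
        rw [Real.log_div (by positivity) h2.ne'] at hd
        have e : (x + (N:ℝ)) / (x + N - 1) - 1 = 1 / (x + N - 1) := by field_simp; ring
        linarith [hd.trans_eq e]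
      have : -(1 / (x + (N:ℝ) - 1)) ≤ phiFn (x + N) := by
        have : x + (N:ℝ) - 1 = (x + N) - 1 := by ring
        linarith [hphi]
      simpa [D] using by linarith [hT, this, one_div (x+(N:ℝ)-1)]
    · filter_upwards [eventually_ge_atTop 2] with N hN
      have h1 : (2:ℝ) ≤ (N:ℝ) := by exact_mod_cast hN
      have h2 : (0:ℝ) < x + N - 1 := by linarith
      have hxN : (0:ℝ) < x + N := by linarith
      have hT := TFn_le hxN
      have hphi := phiFn_nonpos hxN
      have : (1:ℝ) / (x + N) ≤ 1 / (x + N - 1) :=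
        one_div_le_one_div_of_le h2 (by linarith)
      simpa [D] using by linarith [hT, hphi, this, one_div (x+(N:ℝ)-1)]
  have : Tendsto (fun _ : ℕ => D x) atTop (nhds 0) := by
    refine hten.congr fun N => (hiter N)
  have h := tendsto_nhds_unique this tendsto_const_nhds
  simp only [hD] at h
  linarith [h]

lemma phiFn_lt {x y : ℝ} (hx : 0 < x) (hxy : x < y) : phiFn x < phiFn y := by
  have hy : 0 < y := hx.trans hxy
  rw [phiFn_eq_neg_TFn hx, phiFn_eq_neg_TFn hy, neg_lt_neg_iff]
  refine Summable.tsum_lt_tsum_of_nonneg (i := 0) (fun n => (gFn_pos (by positivity)).le)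
    (fun n => ?_) ?_ (summable_gFn hx)
  · exact (gFn_strictAnti (mem_Ioi.mpr (by positivity)) (mem_Ioi.mpr (by positivity))
      (by linarith)).le
  · simpa using gFn_strictAnti (mem_Ioi.mpr hx) (mem_Ioi.mpr hy) hxy

lemma phiFn_le {x y : ℝ} (hx : 0 < x) (hxy : x ≤ y) : phiFn x ≤ phiFn y := by
  rcases eq_or_lt_of_le hxy with h | h
  · rw [h]
  · exact (phiFn_lt hx h).le

lemma phiFn_gap_mono {x₁ x₂ c : ℝ} (hx₁ : 0 < x₁) (h12 : x₁ ≤ x₂) (hc : 0 < c) :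
    phiFn x₁ - phiFn (x₁ + c) ≤ phiFn x₂ - phiFn (x₂ + c) := by
  have hx₂ : 0 < x₂ := lt_of_lt_of_le hx₁ h12
  rw [phiFn_eq_neg_TFn hx₁, phiFn_eq_neg_TFn hx₂,
    phiFn_eq_neg_TFn (by linarith : (0:ℝ) < x₁ + c),
    phiFn_eq_neg_TFn (by linarith : (0:ℝ) < x₂ + c)]
  have key : ∀ z : ℝ, 0 < z → TFn (z + c) - TFn z = ∑' n : ℕ, (gFn (z + c + n) - gFn (z + n)) := by
    intro z hz
    rw [TFn, TFn, ← Summable.tsum_sub (summable_gFn (by linarith : (0:ℝ) < z + c)) (summable_gFn hz)]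
  have h1 : TFn (x₁ + c) - TFn x₁ ≤ TFn (x₂ + c) - TFn x₂ := by
    rw [key x₁ hx₁, key x₂ hx₂]
    refine Summable.tsum_le_tsum (fun n => ?_)
      ((summable_gFn (by linarith : (0:ℝ) < x₁ + c)).sub (summable_gFn hx₁))
      ((summable_gFn (by linarith : (0:ℝ) < x₂ + c)).sub (summable_gFn hx₂))
    have := gFn_gap_mono hc.le (mem_Ioi.mpr (by positivity : (0:ℝ) < x₁ + n))
      (mem_Ioi.mpr (by positivity : (0:ℝ) < x₂ + n)) (by linarith)
    simp only at this
    have e1 : x₁ + (n:ℝ) + c = x₁ + c + n := by ring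
    have e2 : x₂ + (n:ℝ) + c = x₂ + c + n := by ring
    rw [e1, e2] at this
    exact this
  linarith

lemma hasDerivAt_bterm {dd δi : ℝ} (hdd : 0 < dd) (hδi : 0 ≤ δi) {r : ℝ} (hr : 0 < r) :
    HasDerivAt (fun v => (v + dd) / (v + δi) - Real.log ((v + dd) / (v + δi)) - 1)
      (-(δi - dd)^2 / ((r + δi)^2 * (r + dd))) r := by
  have hq : HasDerivAt (fun v : ℝ => (v + dd) / (v + δi)) ((δi - dd) / (r + δi)^2) r := by
    have h1 : HasDerivAt (fun v : ℝ => v + dd) 1 r := (hasDerivAt_id r).add_const dd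
    have h2 : HasDerivAt (fun v : ℝ => v + δi) 1 r := (hasDerivAt_id r).add_const δi
    have := h1.div h2 (by positivity : (0:ℝ) < r + δi).ne'
    refine this.congr_deriv ?_
    field_simp
    ring
  have hlog := hq.log (by positivity : (0:ℝ) < (r + dd) / (r + δi)).ne'
  have := (hq.sub hlog).sub_const 1
  refine this.congr_deriv ?_
  field_simp
  ring

lemma bterm_anti {dd δi : ℝ} (hdd : 0 < dd) (hδi : 0 ≤ δi) :
    AntitoneOn (fun v => (v + dd) / (v + δi) - Real.log ((v + dd) / (v + δi)) - 1) (Ioi 0) := by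
  refine antitoneOn_of_deriv_nonpos (convex_Ioi 0) ?_ ?_ ?_
  · intro r hr
    exact ((hasDerivAt_bterm hdd hδi hr).differentiableAt).continuousAt.continuousWithinAt
  · intro r hr
    rw [interior_Ioi] at hr
    exact ((hasDerivAt_bterm hdd hδi hr).differentiableAt).differentiableWithinAt
  · intro r hr
    rw [interior_Ioi] at hr
    have hr' : (0:ℝ) < r := hr
    rw [(hasDerivAt_bterm hdd hδi hr').deriv]
    have h1 : (0:ℝ) < (r + δi)^2 * (r + dd) := by positivity
    have h2 : (0:ℝ) ≤ (δi - dd)^2 := sq_nonneg _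
    exact div_nonpos_of_nonpos_of_nonneg (by linarith) h1.le

lemma hasDerivAt_negLogLik3 (d n : ℕ) (hd : 1 ≤ d) (x : Fin n → Fin d → ℝ) (w : Fin n → ℝ)
    (μ : Fin d → ℝ) (S : Matrix (Fin d) (Fin d) ℝ)
    (δ : Fin n → ℝ) (hδ : ∀ i, δ i = (x i - μ) ⬝ᵥ S⁻¹ *ᵥ (x i - μ))
    (hδ0 : ∀ i, 0 ≤ δ i) (hw1 : ∑ i, w i = 1) {ν : ℝ} (hν : 0 < ν) :
    HasDerivAt (fun v => negLogLik3 d n x w v μ S)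
      (phiFn (ν/2) - phiFn ((ν + d)/2)
        + ∑ i, w i * ((ν + d)/(ν + δ i) - Real.log ((ν + d)/(ν + δ i)) - 1)) ν := by
  have hd0 : (0:ℝ) < d := by exact_mod_cast Nat.lt_of_lt_of_le Nat.zero_lt_one hd
  have hνd : (0:ℝ) < ν + d := by linarith
  have hfun : (fun v => negLogLik3 d n x w v μ S) = fun v =>
      -2 * Real.log (Real.Gamma (((d:ℝ) + v) / 2)) + 2 * Real.log (Real.Gamma (v / 2))
      - v * Real.log v + ((d:ℝ) + v) * ∑ i, w i * Real.log (v + δ i) + Real.log S.det := by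
    funext v
    unfold negLogLik3
    simp only [← hδ]
  rw [hfun]
  have hg1 : HasDerivAt (fun v : ℝ => Real.log (Real.Gamma (((d:ℝ) + v) / 2)))
      (digamma (((d:ℝ) + ν)/2) * (1/2)) ν := by
    have hin : HasDerivAt (fun v : ℝ => ((d:ℝ) + v) / 2) (1/2) ν := by
      simpa using ((hasDerivAt_id ν).const_add (d:ℝ)).div_const 2
    exact (hasDerivAt_logGamma (by positivity : (0:ℝ) < ((d:ℝ) + ν)/2)).comp ν hin
  have hg2 : HasDerivAt (fun v : ℝ => Real.log (Real.Gamma (v / 2)))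
      (digamma (ν/2) * (1/2)) ν := by
    have hin : HasDerivAt (fun v : ℝ => v / 2) (1/2) ν := by
      simpa using (hasDerivAt_id ν).div_const 2
    exact (hasDerivAt_logGamma (by positivity : (0:ℝ) < ν/2)).comp ν hin
  have hml : HasDerivAt (fun v : ℝ => v * Real.log v) (Real.log ν + 1) ν :=
    Real.hasDerivAt_mul_log hν.ne'
  have hsum : HasDerivAt (fun v : ℝ => ∑ i, w i * Real.log (v + δ i))
      (∑ i, w i * (1 / (ν + δ i))) ν := by
    refine HasDerivAt.fun_sum (fun i _ => ?_)
    have hpos : (0:ℝ) < ν + δ i := by have := hδ0 i; linarith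
    have h := (((hasDerivAt_id ν).add_const (δ i)).log hpos.ne')
    simpa using h.const_mul (w i)
  have hprod : HasDerivAt (fun v : ℝ => ((d:ℝ) + v) * ∑ i, w i * Real.log (v + δ i))
      (1 * (∑ i, w i * Real.log (ν + δ i)) + ((d:ℝ) + ν) * ∑ i, w i * (1 / (ν + δ i))) ν := by
    have hlin : HasDerivAt (fun v : ℝ => (d:ℝ) + v) 1 ν := (hasDerivAt_id ν).const_add (d:ℝ)
    exact hlin.mul hsum
  have hall := ((((hg1.const_mul (-2)).add (hg2.const_mul 2)).sub hml).add hprod).add_const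
    (Real.log S.det)
  refine hall.congr_deriv ?_
  -- identity of derivative values
  have hsum1 : ∑ i, w i * ((ν + d)/(ν + δ i) - Real.log ((ν + d)/(ν + δ i)) - 1)
      = (ν + d) * ∑ i, w i * (1 / (ν + δ i)) + ∑ i, w i * Real.log (ν + δ i)
        - Real.log (ν + d) - 1 := by
    have hterm : ∀ i, w i * ((ν + d)/(ν + δ i) - Real.log ((ν + d)/(ν + δ i)) - 1)
        = (ν + d) * (w i * (1 / (ν + δ i))) + w i * Real.log (ν + δ i)
          - (Real.log (ν + d)) * w i - w i := by
      intro i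
      have hpos : (0:ℝ) < ν + δ i := by have := hδ0 i; linarith
      rw [Real.log_div hνd.ne' hpos.ne']
      ring
    rw [Finset.sum_congr rfl (fun i _ => hterm i)]
    simp only [Finset.sum_sub_distrib, Finset.sum_add_distrib, ← Finset.mul_sum, ← Finset.sum_mul,
      hw1]
    ring
  rw [hsum1, phiFn, phiFn, Real.log_div hν.ne' two_ne_zero, Real.log_div hνd.ne' two_ne_zero,
    show (d:ℝ) + ν = ν + d by ring]
  ring

noncomputable def FF (d : ℕ) (r : ℝ) : ℝ := phiFn (r / 2) - phiFn ((r + d) / 2)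
noncomputable def BB (d n : ℕ) (w δ : Fin n → ℝ) (r : ℝ) : ℝ :=
  ∑ i, w i * ((r + d) / (r + δ i) - Real.log ((r + d) / (r + δ i)) - 1)

section Main
variable (d n : ℕ) (x : Fin n → Fin d → ℝ) (w : Fin n → ℝ) (μ : Fin d → ℝ)
  (S : Matrix (Fin d) (Fin d) ℝ) (δ : Fin n → ℝ)
variable (hd : 1 ≤ d) (hδ : ∀ i, δ i = (x i - μ) ⬝ᵥ S⁻¹ *ᵥ (x i - μ))
  (hδ0 : ∀ i, 0 ≤ δ i) (hw0 : ∀ i, 0 < w i) (hw1 : ∑ i, w i = 1)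

include hd hδ hδ0 hw1 in
lemma hasDerivAt_L {ν : ℝ} (hν : 0 < ν) :
    HasDerivAt (fun v => negLogLik3 d n x w v μ S) (FF d ν + BB d n w δ ν) ν := by
  unfold FF BB
  exact hasDerivAt_negLogLik3 d n hd x w μ S δ hδ hδ0 hw1 hν

include hd hδ0 hw0 in
lemma BB_anti {r₁ r₂ : ℝ} (h1 : 0 < r₁) (h12 : r₁ ≤ r₂) :
    BB d n w δ r₂ ≤ BB d n w δ r₁ := by
  have hd0 : (0:ℝ) < d := by exact_mod_cast Nat.lt_of_lt_of_le Nat.zero_lt_one hd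
  refine Finset.sum_le_sum fun i _ => ?_
  exact mul_le_mul_of_nonneg_left
    (bterm_anti hd0 (hδ0 i) (mem_Ioi.mpr h1) (mem_Ioi.mpr (lt_of_lt_of_le h1 h12)) h12)
    (hw0 i).le

include hd in
lemma FF_mono {r₁ r₂ : ℝ} (h1 : 0 < r₁) (h12 : r₁ ≤ r₂) : FF d r₁ ≤ FF d r₂ := by
  have hd0 : (0:ℝ) < d := by exact_mod_cast Nat.lt_of_lt_of_le Nat.zero_lt_one hd
  unfold FF
  have e : ∀ r : ℝ, (r + (d:ℝ)) / 2 = r / 2 + (d:ℝ) / 2 := fun r => by ring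
  rw [e r₁, e r₂]
  exact phiFn_gap_mono (by linarith) (by linarith) (by positivity)

include hd hδ hδ0 hw0 hw1 in
lemma L_monoOn {m ρ : ℝ} (hm : 0 < m) (hmρ : m ≤ ρ)
    (heq : FF d m + BB d n w δ ρ = 0) :
    MonotoneOn (fun v => negLogLik3 d n x w v μ S) (Icc m ρ) := by
  refine monotoneOn_of_deriv_nonneg (convex_Icc m ρ) ?_ ?_ ?_
  · intro v hv
    exact ((hasDerivAt_L d n x w μ S δ hd hδ hδ0 hw1
      (lt_of_lt_of_le hm hv.1)).differentiableAt).continuousAt.continuousWithinAt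
  · rw [interior_Icc]
    intro v hv
    exact ((hasDerivAt_L d n x w μ S δ hd hδ hδ0 hw1
      (hm.trans hv.1)).differentiableAt).differentiableWithinAt
  · rw [interior_Icc]
    intro v hv
    obtain ⟨hva, hvb⟩ := hv
    have hv0 : 0 < v := hm.trans hva
    rw [(hasDerivAt_L d n x w μ S δ hd hδ hδ0 hw1 hv0).deriv]
    have h1 := FF_mono d hd hm hva.le
    have h2 := BB_anti d n w δ hd hδ0 hw0 hv0 hvb.le
    linarith

include hd hδ hδ0 hw0 hw1 in
lemma L_antiOn {ρ m : ℝ} (hρ : 0 < ρ) (hρm : ρ ≤ m)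
    (heq : FF d m + BB d n w δ ρ = 0) :
    AntitoneOn (fun v => negLogLik3 d n x w v μ S) (Icc ρ m) := by
  refine antitoneOn_of_deriv_nonpos (convex_Icc ρ m) ?_ ?_ ?_
  · intro v hv
    exact ((hasDerivAt_L d n x w μ S δ hd hδ hδ0 hw1
      (lt_of_lt_of_le hρ hv.1)).differentiableAt).continuousAt.continuousWithinAt
  · rw [interior_Icc]
    intro v hv
    exact ((hasDerivAt_L d n x w μ S δ hd hδ hδ0 hw1
      (hρ.trans hv.1)).differentiableAt).differentiableWithinAt
  · rw [interior_Icc]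
    intro v hv
    obtain ⟨hva, hvb⟩ := hv
    have hv0 : 0 < v := hρ.trans hva
    rw [(hasDerivAt_L d n x w μ S δ hd hδ hδ0 hw1 hv0).deriv]
    have h1 := FF_mono d hd hv0 hvb.le
    have h2 := BB_anti d n w δ hd hδ0 hw0 hρ hva.le
    linarith

include hd hδ hδ0 hw0 hw1 in
lemma L_key {ρ m : ℝ} (hρ : 0 < ρ) (hm : 0 < m)
    (heq : FF d m + BB d n w δ ρ = 0) :
    negLogLik3 d n x w m μ S ≤ negLogLik3 d n x w ρ μ S := by
  rcases le_total m ρ with h | h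
  · exact L_monoOn d n x w μ S δ hd hδ hδ0 hw0 hw1 hm h heq
      (mem_Icc.mpr ⟨le_refl m, h⟩) (mem_Icc.mpr ⟨h, le_refl ρ⟩) h
  · exact L_antiOn d n x w μ S δ hd hδ hδ0 hw0 hw1 hρ h heq
      (mem_Icc.mpr ⟨le_refl ρ, h⟩) (mem_Icc.mpr ⟨h, le_refl m⟩) h

include hd hδ hδ0 hw0 hw1 in
lemma L_aEM_le {ρ a : ℝ} (hρ : 0 < ρ) (ha : 0 < a)
    (heq : phiFn (a / 2) - phiFn ((ρ + d) / 2) + BB d n w δ ρ = 0) :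
    negLogLik3 d n x w a μ S ≤ negLogLik3 d n x w ρ μ S := by
  have hd0 : (0:ℝ) < d := by exact_mod_cast Nat.lt_of_lt_of_le Nat.zero_lt_one hd
  rcases le_total a ρ with h | h
  · refine monotoneOn_of_deriv_nonneg (f := fun v => negLogLik3 d n x w v μ S) (convex_Icc a ρ) ?_ ?_ ?_
      (mem_Icc.mpr ⟨le_refl a, h⟩) (mem_Icc.mpr ⟨h, le_refl ρ⟩) h
    · intro v hv
      exact ((hasDerivAt_L d n x w μ S δ hd hδ hδ0 hw1
        (lt_of_lt_of_le ha hv.1)).differentiableAt).continuousAt.continuousWithinAt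
    · rw [interior_Icc]
      intro v hv
      exact ((hasDerivAt_L d n x w μ S δ hd hδ hδ0 hw1
        (ha.trans hv.1)).differentiableAt).differentiableWithinAt
    · rw [interior_Icc]
      intro v hv
      obtain ⟨hva, hvb⟩ := hv
      have hv0 : 0 < v := ha.trans hva
      rw [(hasDerivAt_L d n x w μ S δ hd hδ hδ0 hw1 hv0).deriv]
      have h1 : phiFn (a / 2) ≤ phiFn (v / 2) := phiFn_le (by linarith) (by linarith)
      have h2 : phiFn ((v + d) / 2) ≤ phiFn ((ρ + d) / 2) := phiFn_le (by positivity)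
        (by linarith [hvb])
      have h3 := BB_anti d n w δ hd hδ0 hw0 hv0 hvb.le
      unfold FF
      linarith
  · refine antitoneOn_of_deriv_nonpos (f := fun v => negLogLik3 d n x w v μ S) (convex_Icc ρ a) ?_ ?_ ?_
      (mem_Icc.mpr ⟨le_refl ρ, h⟩) (mem_Icc.mpr ⟨h, le_refl a⟩) h
    · intro v hv
      exact ((hasDerivAt_L d n x w μ S δ hd hδ hδ0 hw1
        (lt_of_lt_of_le hρ hv.1)).differentiableAt).continuousAt.continuousWithinAt
    · rw [interior_Icc]
      intro v hv
      exact ((hasDerivAt_L d n x w μ S δ hd hδ hδ0 hw1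
        (hρ.trans hv.1)).differentiableAt).differentiableWithinAt
    · rw [interior_Icc]
      intro v hv
      obtain ⟨hva, hvb⟩ := hv
      have hv0 : 0 < v := hρ.trans hva
      rw [(hasDerivAt_L d n x w μ S δ hd hδ hδ0 hw1 hv0).deriv]
      have h1 : phiFn (v / 2) ≤ phiFn (a / 2) := phiFn_le (by linarith) (by linarith [hvb])
      have h2 : phiFn ((ρ + d) / 2) ≤ phiFn ((v + d) / 2) := phiFn_le (by positivity)
        (by linarith [hva])
      have h3 := BB_anti d n w δ hd hδ0 hw0 hρ hva.le
      unfold FF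
      linarith

include hd hδ hδ0 hw0 hw1 in
lemma L_aEM_lt {ρ a : ℝ} (hρ : 0 < ρ) (ha : 0 < a)
    (heq : phiFn (a / 2) - phiFn ((ρ + d) / 2) + BB d n w δ ρ = 0)
    (hne : FF d ρ + BB d n w δ ρ ≠ 0) :
    negLogLik3 d n x w a μ S < negLogLik3 d n x w ρ μ S := by
  have hd0 : (0:ℝ) < d := by exact_mod_cast Nat.lt_of_lt_of_le Nat.zero_lt_one hd
  rcases lt_or_gt_of_ne hne with hneg | hpos
  · -- F ρ + B ρ < 0 : then phiFn (ρ/2) < phiFn (a/2), so ρ < a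
    have hlt : phiFn (ρ / 2) < phiFn (a / 2) := by unfold FF at hneg; linarith
    have hρa : ρ < a := by
      by_contra hc
      push_neg at hc
      exact absurd (phiFn_le (by linarith) (by linarith : a / 2 ≤ ρ / 2)) (not_le.mpr hlt)
    have hanti : StrictAntiOn (fun v => negLogLik3 d n x w v μ S) (Icc ρ a) := by
      refine strictAntiOn_of_deriv_neg (convex_Icc ρ a) ?_ ?_
      · intro v hv
        exact ((hasDerivAt_L d n x w μ S δ hd hδ hδ0 hw1
          (lt_of_lt_of_le hρ hv.1)).differentiableAt).continuousAt.continuousWithinAt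
      · rw [interior_Icc]
        intro v hv
        obtain ⟨hva, hvb⟩ := hv
        have hv0 : 0 < v := hρ.trans hva
        rw [(hasDerivAt_L d n x w μ S δ hd hδ hδ0 hw1 hv0).deriv]
        have h1 : phiFn (v / 2) < phiFn (a / 2) := phiFn_lt (by linarith) (by linarith [hvb])
        have h2 : phiFn ((ρ + d) / 2) ≤ phiFn ((v + d) / 2) := phiFn_le (by positivity)
          (by linarith [hva])
        have h3 := BB_anti d n w δ hd hδ0 hw0 hρ hva.le
        unfold FF
        linarith
    exact hanti (mem_Icc.mpr ⟨le_refl ρ, hρa.le⟩) (mem_Icc.mpr ⟨hρa.le, le_refl a⟩) hρa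
  · have hlt : phiFn (a / 2) < phiFn (ρ / 2) := by unfold FF at hpos; linarith
    have haρ : a < ρ := by
      by_contra hc
      push_neg at hc
      exact absurd (phiFn_le (by linarith) (by linarith : ρ / 2 ≤ a / 2)) (not_le.mpr hlt)
    have hmono : StrictMonoOn (fun v => negLogLik3 d n x w v μ S) (Icc a ρ) := by
      refine strictMonoOn_of_deriv_pos (convex_Icc a ρ) ?_ ?_
      · intro v hv
        exact ((hasDerivAt_L d n x w μ S δ hd hδ hδ0 hw1
          (lt_of_lt_of_le ha hv.1)).differentiableAt).continuousAt.continuousWithinAt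
      · rw [interior_Icc]
        intro v hv
        obtain ⟨hva, hvb⟩ := hv
        have hv0 : 0 < v := ha.trans hva
        rw [(hasDerivAt_L d n x w μ S δ hd hδ hδ0 hw1 hv0).deriv]
        have h1 : phiFn (a / 2) < phiFn (v / 2) := phiFn_lt (by linarith) (by linarith [hva])
        have h2 : phiFn ((v + d) / 2) ≤ phiFn ((ρ + d) / 2) := phiFn_le (by positivity)
          (by linarith [hvb])
        have h3 := BB_anti d n w δ hd hδ0 hw0 hv0 hvb.le
        unfold FF
        linarith
    exact hmono (mem_Icc.mpr ⟨le_refl a, haρ.le⟩) (mem_Icc.mpr ⟨haρ.le, le_refl ρ⟩) haρ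
end Main

/-- for fixed `ν_r > 0`, `μ`, `Σ ∈ SPD(d)`, with
`δᵢ = (xᵢ−μ)ᵀ Σ⁻¹ (xᵢ−μ)` and `b = Σᵢ wᵢ [(ν_r+d)/(ν_r+δᵢ) − log((ν_r+d)/(ν_r+δᵢ)) − 1]`,
let `ν^aEM` be the unique zero of `ν ↦ φ(ν/2) − φ((ν_r+d)/2) + b`, `ν^MMF` the unique zero
of `ν ↦ φ(ν/2) − φ((ν+d)/2) + b`, and `ν^GMMF` the limit of the (convergent) inner GMMF
iteration started at `ν_r`. Then
`L(ν_r,μ,Σ) ≥ L(ν^aEM,μ,Σ) ≥ L(ν^MMF,μ,Σ) ≥ L(ν^GMMF,μ,Σ)`, with equality iff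
`∂L/∂ν(ν_r,μ,Σ) = 0`, in which case `ν_r = ν^aEM = ν^MMF = ν^GMMF`. -/
theorem L_decreasing_nu_updates (d n : ℕ) (hd : 1 ≤ d)
    (x : Fin n → Fin d → ℝ) (w : Fin n → ℝ)
    (hw : ∀ i, 0 < w i) (hw1 : ∑ i, w i = 1)
    (νr : ℝ) (hνr : 0 < νr) (μ : Fin d → ℝ)
    (S : Matrix (Fin d) (Fin d) ℝ) (hS : S.PosDef)
    (δ : Fin n → ℝ) (hδ : ∀ i, δ i = (x i - μ) ⬝ᵥ S⁻¹ *ᵥ (x i - μ))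
    (b : ℝ) (hb : b = ∑ i, w i * ((νr + d) / (νr + δ i)
      - Real.log ((νr + d) / (νr + δ i)) - 1))
    -- ν^aEM : the unique zero of ν ↦ φ(ν/2) − φ((ν_r+d)/2) + b
    (νa : ℝ) (hνa : 0 < νa)
    (hνaz : phiFn (νa / 2) - phiFn ((νr + d) / 2) + b = 0)
    (hνau : ∀ z > (0 : ℝ), phiFn (z / 2) - phiFn ((νr + d) / 2) + b = 0 → z = νa)
    -- ν^MMF : the unique zero of ν ↦ φ(ν/2) − φ((ν+d)/2) + b
    (νm : ℝ) (hνm : 0 < νm)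
    (hνmz : phiFn (νm / 2) - phiFn ((νm + d) / 2) + b = 0)
    (hνmu : ∀ z > (0 : ℝ), phiFn (z / 2) - phiFn ((z + d) / 2) + b = 0 → z = νm)
    -- ν^GMMF : the limit of the inner iteration ν₍₀₎ = ν_r,
    -- ν₍ₗ₊₁₎ = zero of ν ↦ φ(ν/2) − φ((ν+d)/2) + Σᵢ wᵢ [(ν₍ₗ₎+d)/(ν₍ₗ₎+δᵢ) − log(…) − 1]
    (g : ℕ → ℝ) (hg0 : g 0 = νr)
    (hgstep : ∀ l, 0 < g (l + 1) ∧
      phiFn (g (l + 1) / 2) - phiFn ((g (l + 1) + d) / 2)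
        + ∑ i, w i * ((g l + d) / (g l + δ i)
          - Real.log ((g l + d) / (g l + δ i)) - 1) = 0)
    (hgu : ∀ l, ∀ z > (0 : ℝ),
      phiFn (z / 2) - phiFn ((z + d) / 2)
        + ∑ i, w i * ((g l + d) / (g l + δ i)
          - Real.log ((g l + d) / (g l + δ i)) - 1) = 0 → z = g (l + 1))
    (νg : ℝ) (hνg : 0 < νg) (hgconv : Tendsto g atTop (nhds νg)) :
    negLogLik3 d n x w νa μ S ≤ negLogLik3 d n x w νr μ S ∧
    negLogLik3 d n x w νm μ S ≤ negLogLik3 d n x w νa μ S ∧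
    negLogLik3 d n x w νg μ S ≤ negLogLik3 d n x w νm μ S ∧
    (negLogLik3 d n x w νr μ S = negLogLik3 d n x w νg μ S ↔
      deriv (fun v => negLogLik3 d n x w v μ S) νr = 0) ∧
    (deriv (fun v => negLogLik3 d n x w v μ S) νr = 0 →
      νr = νa ∧ νa = νm ∧ νm = νg) := by
  classical
  have hd0 : (0:ℝ) < d := by exact_mod_cast Nat.lt_of_lt_of_le Nat.zero_lt_one hd
  have hδ0 : ∀ i, 0 ≤ δ i := by
    intro i
    rw [hδ i]
    have h := (hS.inv).posSemidef.dotProduct_mulVec_nonneg (x i - μ)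
    simpa using h
  have hbB : b = BB d n w δ νr := by unfold BB; exact hb
  have eMMF : FF d νm + BB d n w δ νr = 0 := by
    unfold FF BB
    rw [← hb]
    exact hνmz
  have eaEM : phiFn (νa / 2) - phiFn ((νr + d) / 2) + BB d n w δ νr = 0 := by
    rw [← hbB]; exact hνaz
  -- Part 1
  have hI1 : negLogLik3 d n x w νa μ S ≤ negLogLik3 d n x w νr μ S :=
    L_aEM_le d n x w μ S δ hd hδ hδ0 hw hw1 hνr hνa eaEM
  -- Part 2
  have hI2 : negLogLik3 d n x w νm μ S ≤ negLogLik3 d n x w νa μ S := by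
    rcases le_total νm νr with h | h
    · have hma : νm ≤ νa := by
        by_contra hc
        push_neg at hc
        have h1 : phiFn ((νm + d) / 2) ≤ phiFn ((νr + d) / 2) :=
          phiFn_le (by positivity) (by linarith)
        have h2 : phiFn (νa / 2) < phiFn (νm / 2) := phiFn_lt (by linarith) (by linarith)
        linarith [hνaz, hνmz]
      have haρ : νa ≤ νr := by
        by_contra hc
        push_neg at hc
        have h2 : phiFn (νr / 2) < phiFn (νa / 2) := phiFn_lt (by linarith) (by linarith)
        have h3 : phiFn (νm / 2) - phiFn ((νm + (d:ℝ)) / 2)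
            ≤ phiFn (νr / 2) - phiFn ((νr + (d:ℝ)) / 2) := FF_mono d hd hνm h
        linarith [hνaz, hνmz]
      exact L_monoOn d n x w μ S δ hd hδ hδ0 hw hw1 hνm h eMMF
        (mem_Icc.mpr ⟨le_refl νm, h⟩) (mem_Icc.mpr ⟨hma, haρ⟩) hma
    · have hma : νa ≤ νm := by
        by_contra hc
        push_neg at hc
        have h1 : phiFn ((νr + d) / 2) ≤ phiFn ((νm + d) / 2) :=
          phiFn_le (by positivity) (by linarith)
        have h2 : phiFn (νm / 2) < phiFn (νa / 2) := phiFn_lt (by linarith) (by linarith)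
        linarith [hνaz, hνmz]
      have hρa : νr ≤ νa := by
        by_contra hc
        push_neg at hc
        have h2 : phiFn (νa / 2) < phiFn (νr / 2) := phiFn_lt (by linarith) (by linarith)
        have h3 : phiFn (νr / 2) - phiFn ((νr + (d:ℝ)) / 2)
            ≤ phiFn (νm / 2) - phiFn ((νm + (d:ℝ)) / 2) := FF_mono d hd hνr h
        linarith [hνaz, hνmz]
      exact L_antiOn d n x w μ S δ hd hδ hδ0 hw hw1 hνr h eMMF
        (mem_Icc.mpr ⟨hρa, hma⟩) (mem_Icc.mpr ⟨h, le_refl νm⟩) hma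
  -- GMMF facts
  have hgpos : ∀ l, 0 < g l := by
    intro l
    cases l with
    | zero => rw [hg0]; exact hνr
    | succ k => exact (hgstep k).1
  have hstep : ∀ l, negLogLik3 d n x w (g (l+1)) μ S ≤ negLogLik3 d n x w (g l) μ S := by
    intro l
    refine L_key d n x w μ S δ hd hδ hδ0 hw hw1 (hgpos l) (hgpos (l+1)) ?_
    exact (hgstep l).2
  have hg1 : g 1 = νm := by
    refine hνmu (g 1) (hgpos 1) ?_
    have h := (hgstep 0).2
    rw [hg0] at h
    rw [hb]
    exact h
  have hchain : ∀ l, 1 ≤ l → negLogLik3 d n x w (g l) μ S ≤ negLogLik3 d n x w (g 1) μ S := by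
    intro l hl
    induction l with
    | zero => omega
    | succ k ih =>
      rcases Nat.lt_or_ge 1 (k+1) with h1 | h1
      · exact (hstep k).trans (ih (by omega))
      · have : k + 1 = 1 := by omega
        rw [this]
  have hcont : ContinuousAt (fun v => negLogLik3 d n x w v μ S) νg :=
    (hasDerivAt_L d n x w μ S δ hd hδ hδ0 hw1 hνg).differentiableAt.continuousAt
  have hLg : Tendsto (fun l => negLogLik3 d n x w (g l) μ S) atTop
      (nhds (negLogLik3 d n x w νg μ S)) := hcont.tendsto.comp hgconv
  have hI3 : negLogLik3 d n x w νg μ S ≤ negLogLik3 d n x w νm μ S := by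
    rw [← hg1]
    refine le_of_tendsto hLg ?_
    filter_upwards [eventually_ge_atTop 1] with l hl using hchain l hl
  -- derivative at νr
  have hderiv_eq : deriv (fun v => negLogLik3 d n x w v μ S) νr = FF d νr + BB d n w δ νr :=
    (hasDerivAt_L d n x w μ S δ hd hδ hδ0 hw1 hνr).deriv
  have hcase : deriv (fun v => negLogLik3 d n x w v μ S) νr = 0 →
      νr = νa ∧ νa = νm ∧ νm = νg := by
    intro h0
    have hz : phiFn (νr / 2) - phiFn ((νr + d) / 2) + b = 0 := by
      rw [hderiv_eq] at h0
      rw [hbB]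
      unfold FF at h0
      linarith
    have h1 : νr = νa := hνau νr hνr hz
    have h2 : νr = νm := hνmu νr hνr hz
    have hgl : ∀ l, g l = νr := by
      intro l
      induction l with
      | zero => exact hg0
      | succ k ih =>
        refine (hgu k νr hνr ?_).symm
        rw [ih, ← hb]
        exact hz
    have h3 : νg = νr := by
      have hgconst : g = fun _ => νr := funext hgl
      rw [hgconst] at hgconv
      exact tendsto_nhds_unique hgconv tendsto_const_nhds
    exact ⟨h1, h1.symm.trans h2, h2.symm.trans h3.symm⟩
  refine ⟨hI1, hI2, hI3, ⟨?_, ?_⟩, hcase⟩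
  · intro hEq
    by_contra hne
    have hne' : FF d νr + BB d n w δ νr ≠ 0 := by rwa [hderiv_eq] at hne
    have hstrict := L_aEM_lt d n x w μ S δ hd hδ hδ0 hw hw1 hνr hνa eaEM hne'
    linarith [hI3, hI2]
  · intro h0
    obtain ⟨h1, h2, h3⟩ := hcase h0
    rw [show νr = νg from (h1.trans h2).trans h3]
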